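/- arXiv:2102.13562 — 5 statements merged into one kernel-verified Lean document; each statement's English description precedes it below -/
import Mathlib

section
/- [Claim 1 in the proof of Lemma 1] Let (λ_s, π_s)_{s∈S} be an optimal splitting of the prior π° ∈ Δ(Ω). Then for every μ ∈ Δ(S), ū(Σ_{s∈S} μ_s π_s) ≤ Σ_{s∈S} μ_s ū(π_s). -/
open Finset

variable {Ω A : Type*}

/-- Expected payoff of mixed action `α` at belief `π` (bilinear extension of `u`). -/
noncomputable def pay [Fintype Ω] [Fintype A] (u : A → Ω → ℝ) (α : A → ℝ) (π : Ω → ℝ) : ℝ :=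
  ∑ a, ∑ ω, α a * π ω * u a ω

/-- Expected payoff of pure action `a` at belief `π`. -/
noncomputable def payP [Fintype Ω] (u : A → Ω → ℝ) (a : A) (π : Ω → ℝ) : ℝ :=
  ∑ ω, π ω * u a ω

/-- Pure best replies of the decision-maker at belief `π`. -/
def br [Fintype Ω] (v : A → Ω → ℝ) (π : Ω → ℝ) : Set A :=
  {a | ∀ a', payP v a' π ≤ payP v a π}

/-- Mixed best replies of the decision-maker at belief `π`. -/
def BR [Fintype Ω] [Fintype A] (v : A → Ω → ℝ) (π : Ω → ℝ) : Set (A → ℝ) :=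
  {α ∈ stdSimplex ℝ A | ∀ α' ∈ stdSimplex ℝ A, pay v α' π ≤ pay v α π}

/-- The expert value function `ū(π) = max_{α ∈ BR(π)} u(α, π)`. -/
noncomputable def ubar [Fintype Ω] [Fintype A] (u v : A → Ω → ℝ) (π : Ω → ℝ) : ℝ :=
  sSup ((fun α => pay u α π) '' BR v π)

/-- The decision-maker value function `v̄(π) = max_a v(a, π)`. -/
noncomputable def vbar [Fintype Ω] [Fintype A] (v : A → Ω → ℝ) (π : Ω → ℝ) : ℝ :=
  ⨆ a, payP v a π

/-- Actions that are a best reply to some belief. -/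
def Ahat [Fintype Ω] [Fintype A] (v : A → Ω → ℝ) : Set A :=
  {a | ∃ π ∈ stdSimplex ℝ Ω, a ∈ br v π}

/-- Mixed actions supported on `B`. -/
def simplexOn [Fintype A] (B : Set A) : Set (A → ℝ) :=
  {α | α ∈ stdSimplex ℝ A ∧ ∀ a ∉ B, α a = 0}

/-- `(lam, p)` is a splitting of the prior. -/
def IsSplitting [Fintype Ω] {S : Type*} [Fintype S] (lam : S → ℝ) (p : S → Ω → ℝ)
    (prior : Ω → ℝ) : Prop :=
  (∀ s, 0 < lam s) ∧ (∑ s, lam s) = 1 ∧ (∀ s, p s ∈ stdSimplex ℝ Ω) ∧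
    ∀ ω, (∑ s, lam s * p s ω) = prior ω

/-- `(lam, p)` is an optimal splitting of the prior: it attains `cav ū (prior)`. -/
def IsOptimalSplitting [Fintype Ω] [Fintype A] (u v : A → Ω → ℝ) {S : Type*} [Fintype S]
    (lam : S → ℝ) (p : S → Ω → ℝ) (prior : Ω → ℝ) : Prop :=
  IsSplitting lam p prior ∧
    ∀ (T : Type) [Fintype T] [Nonempty T] (mu : T → ℝ) (q : T → Ω → ℝ),
      IsSplitting mu q prior →
        (∑ t, mu t * ubar u v (q t)) ≤ ∑ s, lam s * ubar u v (p s)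

/-- Claim 1 in the proof of Lemma 1. -/
theorem claim1 {Ω A S : Type*} [Fintype Ω] [Nonempty Ω] [Fintype A] [Nonempty A]
    [Fintype S] [Nonempty S] (u v : A → Ω → ℝ) (prior : Ω → ℝ) (hprior : prior ∈ stdSimplex ℝ Ω)
    (lam : S → ℝ) (p : S → Ω → ℝ) (hopt : IsOptimalSplitting u v lam p prior) :
    ∀ μ ∈ stdSimplex ℝ S,
      ubar u v (fun ω => ∑ s, μ s * p s ω) ≤ ∑ s, μ s * ubar u v (p s) := by
  intro mu hmu
  obtain ⟨hsplit, hoptim⟩ := hopt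
  obtain ⟨hlamp, hlsum, hps, hmix⟩ := hsplit
  have hmu0 : ∀ s, 0 ≤ mu s := fun s => hmu.1 s
  have hmusum : ∑ s, mu s = 1 := hmu.2
  have hmule1 : ∀ s, mu s ≤ 1 := by
    intro s
    calc mu s ≤ ∑ s', mu s' :=
          Finset.single_le_sum (fun i _ => hmu0 i) (Finset.mem_univ s)
      _ = 1 := hmusum
  have hne : (Finset.univ : Finset S).Nonempty := Finset.univ_nonempty
  set m := Finset.univ.inf' hne lam with hm
  have hm0 : 0 < m := by
    rw [hm, Finset.lt_inf'_iff]
    exact fun i _ => hlamp i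
  set t : ℝ := m / 2 with htdef
  have ht0 : 0 < t := by positivity
  have htlt : ∀ s, t < lam s := by
    intro s
    have h1 : m ≤ lam s := Finset.inf'_le _ (Finset.mem_univ s)
    simp only [htdef]; linarith
  set πμ : Ω → ℝ := fun ω => ∑ s, mu s * p s ω with hπμ
  set n := Fintype.card S with hn
  set e := Fintype.equivFin S with he
  set mu' : Fin (n + 1) → ℝ :=
    Fin.snoc (fun i => lam (e.symm i) - t * mu (e.symm i)) t with hmu'
  set q' : Fin (n + 1) → Ω → ℝ := Fin.snoc (fun i => p (e.symm i)) πμ with hq'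
  have hcomp : ∀ (f : S → ℝ), ∑ i : Fin n, f (e.symm i) = ∑ s, f s := by
    intro f; exact Equiv.sum_comp e.symm f
  have hsplit' : IsSplitting mu' q' prior := by
    refine ⟨?_, ?_, ?_, ?_⟩
    · intro i
      induction i using Fin.lastCases with
      | last => simpa [hmu'] using ht0
      | cast i =>
        simp only [hmu', Fin.snoc_castSucc]
        have h1 : t * mu (e.symm i) ≤ t * 1 :=
          mul_le_mul_of_nonneg_left (hmule1 _) ht0.le
        have h2 := htlt (e.symm i)
        linarith
    · rw [Fin.sum_univ_castSucc]
      simp only [hmu', Fin.snoc_castSucc, Fin.snoc_last]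
      have : ∑ i : Fin n, (lam (e.symm i) - t * mu (e.symm i))
          = ∑ s, (lam s - t * mu s) := hcomp (fun s => lam s - t * mu s)
      rw [this, Finset.sum_sub_distrib, ← Finset.mul_sum, hlsum, hmusum]
      ring
    · intro i
      induction i using Fin.lastCases with
      | last =>
        simp only [hq', Fin.snoc_last]
        constructor
        · intro ω
          exact Finset.sum_nonneg fun s _ =>
            mul_nonneg (hmu0 s) ((hps s).1 ω)
        · simp only [hπμ]
          rw [Finset.sum_comm]
          have : ∀ s, ∑ ω, mu s * p s ω = mu s := by
            intro s
            rw [← Finset.mul_sum, (hps s).2, mul_one]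
          simp only [this, hmusum]
      | cast i =>
        simp only [hq', Fin.snoc_castSucc]
        exact hps _
    · intro ω
      rw [Fin.sum_univ_castSucc]
      simp only [hmu', hq', Fin.snoc_castSucc, Fin.snoc_last]
      have h1 : ∑ i : Fin n, (lam (e.symm i) - t * mu (e.symm i)) * p (e.symm i) ω
          = ∑ s, (lam s - t * mu s) * p s ω := hcomp (fun s => (lam s - t * mu s) * p s ω)
      rw [h1, ← hmix ω]
      simp only [hπμ]
      rw [Finset.mul_sum, ← Finset.sum_add_distrib]
      congr 1; ext s; ring
  have key := hoptim (Fin (n + 1)) mu' q' hsplit'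
  rw [Fin.sum_univ_castSucc] at key
  simp only [hmu', hq', Fin.snoc_castSucc, Fin.snoc_last] at key
  have h1 : ∑ i : Fin n,
      (lam (e.symm i) - t * mu (e.symm i)) * ubar u v (p (e.symm i))
      = ∑ s, (lam s - t * mu s) * ubar u v (p s) := hcomp (fun s => (lam s - t * mu s) * ubar u v (p s))
  rw [h1] at key
  have h2 : ∑ s, (lam s - t * mu s) * ubar u v (p s)
      = ∑ s, lam s * ubar u v (p s) - t * ∑ s, mu s * ubar u v (p s) := by
    rw [Finset.mul_sum, ← Finset.sum_sub_distrib]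
    congr 1; ext s; ring
  rw [h2] at key
  have h3 : t * ubar u v πμ ≤ t * ∑ s, mu s * ubar u v (p s) := by linarith
  have := le_of_mul_le_mul_left h3 ht0
  simpa [hπμ] using this
end

section
/- [Supporting hyperplane step in the proof of Claim 1] Let (λ_s, π_s)_{s∈S} be an optimal splitting of the prior π° ∈ Δ(Ω). Then there exists an affine function h : (Ω → ℝ) → ℝ such that ū(π) ≤ h(π) for all π ∈ Δ(Ω) and h(π_s) = ū(π_s) for every s ∈ S. -/
open Finset

variable {Ω A : Type*}

section AuxLemmas

variable [Fintype Ω] [Fintype A]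

/-- pay as weighted sum of payP -/

lemma pay_eq_sum (u : A → Ω → ℝ) (α : A → ℝ) (π : Ω → ℝ) :
    pay u α π = ∑ a, α a * payP u a π := by
  unfold pay payP
  refine Finset.sum_congr rfl fun a _ => ?_
  rw [Finset.mul_sum]
  refine Finset.sum_congr rfl fun ω _ => by ring

/-- the Dirac mixed action -/
noncomputable def delta [DecidableEq A] (a : A) : A → ℝ := fun a' => if a' = a then 1 else 0

lemma delta_mem_stdSimplex [DecidableEq A] (a : A) : delta a ∈ stdSimplex ℝ A := by
  constructor
  · intro a'; unfold delta; split <;> norm_num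
  · simp [delta]

lemma pay_delta [DecidableEq A] (u : A → Ω → ℝ) (a : A) (π : Ω → ℝ) :
    pay u (delta a) π = payP u a π := by
  rw [pay_eq_sum]
  have : ∀ a' ∈ Finset.univ (α := A), delta a a' * payP u a' π
      = if a' = a then payP u a' π else 0 := by
    intro a' _; unfold delta; split <;> simp
  rw [Finset.sum_congr rfl this, Finset.sum_ite_eq' Finset.univ a (fun a' => payP u a' π)]
  simp

lemma exists_br [Nonempty A] (v : A → Ω → ℝ) (π : Ω → ℝ) : ∃ a, a ∈ br v π := by
  obtain ⟨b, -, hb⟩ := Finset.exists_max_image Finset.univ (fun a => payP v a π)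
    Finset.univ_nonempty
  exact ⟨b, fun a' => hb a' (Finset.mem_univ a')⟩

lemma pay_le_of_forall {w : A → Ω → ℝ} {α : A → ℝ} {π : Ω → ℝ} {B : ℝ}
    (hα : α ∈ stdSimplex ℝ A) (hB : ∀ a, payP w a π ≤ B) : pay w α π ≤ B := by
  rw [pay_eq_sum]
  calc ∑ a, α a * payP w a π ≤ ∑ a, α a * B :=
        Finset.sum_le_sum fun a _ => mul_le_mul_of_nonneg_left (hB a) (hα.1 a)
    _ = B := by rw [← Finset.sum_mul, hα.2, one_mul]

lemma delta_mem_BR [DecidableEq A] {v : A → Ω → ℝ} {π : Ω → ℝ} {a : A} (ha : a ∈ br v π) :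
    delta a ∈ BR v π := by
  refine ⟨delta_mem_stdSimplex a, fun α' hα' => ?_⟩
  rw [pay_delta]
  exact pay_le_of_forall hα' ha

lemma bddAbove_pay_BR [Nonempty A] (u v : A → Ω → ℝ) (π : Ω → ℝ) :
    BddAbove ((fun α => pay u α π) '' BR v π) := by
  obtain ⟨b, -, hb⟩ := Finset.exists_max_image Finset.univ (fun a => payP u a π)
    Finset.univ_nonempty
  refine ⟨payP u b π, ?_⟩
  rintro y ⟨α, hα, rfl⟩
  exact pay_le_of_forall hα.1 (fun a => hb a (Finset.mem_univ a))

lemma payP_le_ubar [Nonempty A] {u v : A → Ω → ℝ} {π : Ω → ℝ} {a : A}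
    (hπ : π ∈ stdSimplex ℝ Ω) (ha : a ∈ br v π) : payP u a π ≤ ubar u v π := by
  classical
  have hmem : pay u (delta a) π ∈ (fun α => pay u α π) '' BR v π :=
    Set.mem_image_of_mem (fun α => pay u α π) (delta_mem_BR ha)
  have := le_csSup (bddAbove_pay_BR u v π) hmem
  rwa [pay_delta] at this

lemma mem_BR_support [Nonempty A] {v : A → Ω → ℝ} {π : Ω → ℝ} {α : A → ℝ}
    (hα : α ∈ BR v π) {a : A} (hane : α a ≠ 0) : a ∈ br v π := by
  classical
  obtain ⟨astar, hastar⟩ := exists_br v π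
  have hge : pay v (delta astar) π ≤ pay v α π := hα.2 _ (delta_mem_stdSimplex astar)
  rw [pay_delta] at hge
  have hsum : ∑ b, α b * (payP v astar π - payP v b π) ≤ 0 := by
    have : ∑ b, α b * (payP v astar π - payP v b π)
        = (∑ b, α b) * payP v astar π - pay v α π := by
      rw [pay_eq_sum, Finset.sum_mul, ← Finset.sum_sub_distrib]
      exact Finset.sum_congr rfl fun b _ => by ring
    rw [this, hα.1.2, one_mul]
    linarith
  have hnn : ∀ b ∈ Finset.univ (α := A), 0 ≤ α b * (payP v astar π - payP v b π) :=
    fun b _ => mul_nonneg (hα.1.1 b) (by linarith [hastar b])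
  have hzero : ∀ b ∈ Finset.univ (α := A), α b * (payP v astar π - payP v b π) = 0 :=
    (Finset.sum_eq_zero_iff_of_nonneg hnn).1 (le_antisymm hsum (Finset.sum_nonneg hnn))
  have h := hzero a (Finset.mem_univ a)
  have heq : payP v a π = payP v astar π := by
    rcases mul_eq_zero.1 h with h' | h'
    · exact absurd h' hane
    · linarith
  intro a'
  rw [heq]; exact hastar a'

lemma ubar_attained [Nonempty A] (u v : A → Ω → ℝ) {π : Ω → ℝ} (hπ : π ∈ stdSimplex ℝ Ω) :
    ∃ a, a ∈ br v π ∧ ubar u v π = payP u a π := by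
  classical
  obtain ⟨astar, hastar⟩ := exists_br v π
  have hFne : (Finset.univ.filter (fun a => a ∈ br v π)).Nonempty :=
    ⟨astar, by simp [hastar]⟩
  obtain ⟨b, hbF, hb⟩ := Finset.exists_max_image _ (fun a => payP u a π) hFne
  have hbbr : b ∈ br v π := by simpa using hbF
  refine ⟨b, hbbr, ?_⟩
  have hgr : IsGreatest ((fun α => pay u α π) '' BR v π) (payP u b π) := by
    constructor
    · exact ⟨delta b, delta_mem_BR hbbr, pay_delta u b π⟩
    · rintro y ⟨α, hα, rfl⟩
      have : ∀ a ∈ Finset.univ (α := A), α a * payP u a π ≤ α a * payP u b π := by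
        intro a _
        rcases eq_or_ne (α a) 0 with h0 | h0
        · simp [h0]
        · refine mul_le_mul_of_nonneg_left ?_ (hα.1.1 a)
          exact hb a (by simp [mem_BR_support hα h0])
      calc pay u α π = ∑ a, α a * payP u a π := pay_eq_sum u α π
        _ ≤ ∑ a, α a * payP u b π := Finset.sum_le_sum this
        _ = payP u b π := by rw [← Finset.sum_mul, hα.1.2, one_mul]
  exact hgr.csSup_eq


/-- The polytope of beliefs where `a` is a best reply. -/

def Pset (v : A → Ω → ℝ) (a : A) : Set (Ω → ℝ) := {π | π ∈ stdSimplex ℝ Ω ∧ a ∈ br v π}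

lemma payP_combo (u : A → Ω → ℝ) (a : A) (b c : ℝ) (x y : Ω → ℝ) :
    payP u a (b • x + c • y) = b * payP u a x + c * payP u a y := by
  unfold payP
  rw [Finset.mul_sum, Finset.mul_sum, ← Finset.sum_add_distrib]
  refine Finset.sum_congr rfl fun ω _ => ?_
  simp [Pi.add_apply, Pi.smul_apply, smul_eq_mul]; ring

lemma convex_Pset (v : A → Ω → ℝ) (a : A) : Convex ℝ (Pset v a) := by
  intro x hx y hy b c hb hc hbc
  refine ⟨convex_stdSimplex ℝ Ω hx.1 hy.1 hb hc hbc, fun a' => ?_⟩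
  rw [payP_combo, payP_combo]
  exact add_le_add (mul_le_mul_of_nonneg_left (hx.2 a') hb)
    (mul_le_mul_of_nonneg_left (hy.2 a') hc)

lemma continuous_payP (u : A → Ω → ℝ) (a : A) : Continuous fun π : Ω → ℝ => payP u a π := by
  unfold payP
  exact continuous_finset_sum _ fun ω _ => (continuous_apply ω).mul continuous_const

lemma isClosed_Pset (v : A → Ω → ℝ) (a : A) : IsClosed (Pset v a) := by
  have : Pset v a = stdSimplex ℝ Ω ∩ ⋂ a', {π : Ω → ℝ | payP v a' π ≤ payP v a π} := by
    ext π; simp [Pset, br, Set.mem_iInter]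
  rw [this]
  exact (isClosed_stdSimplex ℝ Ω).inter
    (isClosed_iInter fun a' => isClosed_le (continuous_payP v a') (continuous_payP v a))

lemma isCompact_Pset (v : A → Ω → ℝ) (a : A) : IsCompact (Pset v a) :=
  (isCompact_stdSimplex ℝ Ω).of_isClosed_subset (isClosed_Pset v a) fun _ h => h.1

lemma finite_extremePoints_Pset (v : A → Ω → ℝ) (a : A) :
    ((Pset v a).extremePoints ℝ).Finite := by
  classical
  set E := (Pset v a).extremePoints ℝ with hE
  let τ : (Ω → ℝ) → Finset Ω × Finset A := fun π =>
    (Finset.univ.filter (fun ω => π ω = 0),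
     Finset.univ.filter (fun a' => payP v a' π = payP v a π))
  have hinj : Set.InjOn τ E := by
    intro x hx y hy hτ
    by_contra hne
    obtain ⟨hxP, hxext⟩ := hx
    obtain ⟨hyP, hyext⟩ := hy
    obtain ⟨hxΔ, hxbr⟩ := hxP
    obtain ⟨hyΔ, hybr⟩ := hyP
    have hτ1 : ∀ ω, x ω = 0 ↔ y ω = 0 := by
      intro ω
      have := congrArg Prod.fst hτ
      simp only [τ, Finset.ext_iff, Finset.mem_filter, Finset.mem_univ, true_and] at this
      exact this ω
    have hτ2 : ∀ a', payP v a' x = payP v a x ↔ payP v a' y = payP v a y := by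
      intro a'
      have := congrArg Prod.snd hτ
      simp only [τ, Finset.ext_iff, Finset.mem_filter, Finset.mem_univ, true_and] at this
      exact this a'
    set gx : A → ℝ := fun a' => payP v a x - payP v a' x with hgx
    set gy : A → ℝ := fun a' => payP v a y - payP v a' y with hgy
    have hgxnn : ∀ a', 0 ≤ gx a' := fun a' => by simp [hgx, hxbr a']
    have hgynn : ∀ a', 0 ≤ gy a' := fun a' => by simp [hgy, hybr a']
    -- choose ε
    let F : Finset ℝ := insert 1
      (((Finset.univ.filter (fun ω => 0 < x ω)).image x) ∪
       ((Finset.univ.filter (fun a' => 0 < gx a')).image (fun a' => gx a' / (gy a' + 1))))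
    have hFne : F.Nonempty := ⟨1, Finset.mem_insert_self 1 _⟩
    set ε := F.min' hFne with hεdef
    have hεmem := F.min'_mem hFne
    have hpos : ∀ r ∈ F, (0:ℝ) < r := by
      intro r hr
      rcases Finset.mem_insert.1 hr with h | h
      · rw [h]; norm_num
      · rcases Finset.mem_union.1 h with h | h
        · obtain ⟨ω, hω, rfl⟩ := Finset.mem_image.1 h
          exact (Finset.mem_filter.1 hω).2
        · obtain ⟨a', ha', rfl⟩ := Finset.mem_image.1 h
          exact div_pos (Finset.mem_filter.1 ha').2 (by linarith [hgynn a'])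
    have hεpos : 0 < ε := hpos _ hεmem
    have hε1 : ε ≤ 1 := F.min'_le 1 (Finset.mem_insert_self 1 _)
    have hεx : ∀ ω, 0 < x ω → ε ≤ x ω := by
      intro ω h
      exact F.min'_le _ (Finset.mem_insert.2 (Or.inr (Finset.mem_union.2 (Or.inl
        (Finset.mem_image.2 ⟨ω, Finset.mem_filter.2 ⟨Finset.mem_univ ω, h⟩, rfl⟩)))))
    have hεg : ∀ a', 0 < gx a' → ε ≤ gx a' / (gy a' + 1) := by
      intro a' h
      exact F.min'_le _ (Finset.mem_insert.2 (Or.inr (Finset.mem_union.2 (Or.inr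
        (Finset.mem_image.2 ⟨a', Finset.mem_filter.2 ⟨Finset.mem_univ a', h⟩, rfl⟩)))))
    have hyle1 : ∀ ω, y ω ≤ 1 := by
      intro ω
      have := Finset.single_le_sum (f := y) (fun i _ => hyΔ.1 i) (Finset.mem_univ ω)
      rwa [hyΔ.2] at this
    -- the two perturbed points
    set zp := (1 - ε) • x + ε • y with hzp
    set zm := (1 + ε) • x + (-ε) • y with hzm
    have hzpP : zp ∈ Pset v a :=
      convex_Pset v a ⟨hxΔ, hxbr⟩ ⟨hyΔ, hybr⟩ (by linarith) (le_of_lt hεpos) (by ring)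
    have hzmP : zm ∈ Pset v a := by
      refine ⟨⟨?_, ?_⟩, ?_⟩
      · intro ω
        simp only [hzm, Pi.add_apply, Pi.smul_apply, smul_eq_mul]
        rcases eq_or_lt_of_le (hxΔ.1 ω) with h0 | h0
        · have hy0 : y ω = 0 := (hτ1 ω).1 h0.symm
          rw [← h0, hy0]; norm_num
        · have := hεx ω h0
          have := hyle1 ω
          nlinarith
      · have : ∑ ω, ((1 + ε) • x + (-ε) • y) ω = (1 + ε) * (∑ ω, x ω) + (-ε) * ∑ ω, y ω := by
          rw [Finset.mul_sum, Finset.mul_sum, ← Finset.sum_add_distrib]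
          exact Finset.sum_congr rfl fun ω _ => by
            simp [Pi.add_apply, Pi.smul_apply, smul_eq_mul]
        rw [this, hxΔ.2, hyΔ.2]; ring
      · intro a'
        rw [payP_combo, payP_combo]
        rcases eq_or_lt_of_le (hgxnn a') with h0 | h0
        · have htx : payP v a' x = payP v a x := by simp [hgx] at h0; linarith
          have hty : payP v a' y = payP v a y := (hτ2 a').1 htx
          rw [htx, hty]
        · have h1 := hεg a' h0
          have h2 : ε * (gy a' + 1) ≤ gx a' :=
            (le_div_iff₀ (by linarith [hgynn a'])).1 h1
          have h3 := hgynn a'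
          have h4 : 0 < ε * gx a' := mul_pos hεpos h0
          simp only [hgx, hgy] at h2 h3 h4 ⊢
          nlinarith
    have hseg : x ∈ openSegment ℝ zm zp := by
      refine ⟨1/2, 1/2, by norm_num, by norm_num, by norm_num, ?_⟩
      funext ω
      simp only [hzm, hzp, Pi.add_apply, Pi.smul_apply, smul_eq_mul]
      ring
    obtain ⟨-, hzpx⟩ := (mem_extremePoints.1 (show x ∈ (Pset v a).extremePoints ℝ from ⟨⟨hxΔ, hxbr⟩, hxext⟩)).2 zm hzmP zp hzpP hseg
    apply hne
    funext ω
    have := congrFun hzpx ω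
    simp only [hzp, Pi.add_apply, Pi.smul_apply, smul_eq_mul] at this
    nlinarith [this]
  have : Set.Finite (τ '' E) := Set.toFinite _
  exact Set.Finite.of_finite_image this hinj

lemma Pset_eq_convexHull (v : A → Ω → ℝ) (a : A) :
    Pset v a = convexHull ℝ ((Pset v a).extremePoints ℝ) := by
  have h1 := closure_convexHull_extremePoints (isCompact_Pset v a) (convex_Pset v a)
  have h2 : IsClosed (convexHull ℝ ((Pset v a).extremePoints ℝ)) :=
    ((finite_extremePoints_Pset v a).isCompact_convexHull ℝ).isClosed
  rw [← h2.closure_eq]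
  exact h1.symm



end AuxLemmas

/-- Fourier–Motzkin elimination / Farkas-type lemma. -/

lemma fm_lemma {ι : Type*} [Fintype ι] [DecidableEq ι] (D : Finset ι) :
    ∀ (κ : Type*) [Fintype κ] (x : κ → ι → ℝ) (t : κ → ℝ),
      (∀ k, ∀ i ∉ D, x k i = 0) →
      (∀ μ : κ → ℝ, (∀ k, 0 ≤ μ k) → (∀ i, ∑ k, μ k * x k i = 0) → ∑ k, μ k * t k ≤ 0) →
      ∃ c : ι → ℝ, ∀ k, t k ≤ ∑ i, c i * x k i := by
  classical
  induction D using Finset.induction_on with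
  | empty =>
    intro κ _ x t hsupp H
    refine ⟨0, fun k => ?_⟩
    have h1 : ∀ i, ∑ k', (if k' = k then (1:ℝ) else 0) * x k' i = 0 := by
      intro i
      have : ∀ k', x k' i = 0 := fun k' => hsupp k' i (Finset.notMem_empty i)
      simp [this]
    have h2 := H (fun k' => if k' = k then 1 else 0) (by intro k'; by_cases h : k' = k <;> simp [h]) h1
    have h3 : ∑ k', (if k' = k then (1:ℝ) else 0) * t k' = t k := by
      rw [Finset.sum_congr rfl (fun k' _ => by
        show (if k' = k then (1:ℝ) else 0) * t k' = if k' = k then t k' else 0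
        split <;> ring)]
      rw [Finset.sum_ite_eq' Finset.univ k t]
      simp
    rw [h3] at h2
    simpa using h2
  | @insert i₀ D' hi₀ IH =>
    intro κ _ x t hsupp H
    -- new index type
    let K := ({p : κ × κ // 0 < x p.1 i₀ ∧ x p.2 i₀ < 0}) ⊕ ({k : κ // x k i₀ = 0})
    let x' : K → ι → ℝ := Sum.elim
      (fun p i => (-(x p.1.2 i₀)) * x p.1.1 i + (x p.1.1 i₀) * x p.1.2 i)
      (fun q => x q.1)
    let t' : K → ℝ := Sum.elim
      (fun p => (-(x p.1.2 i₀)) * t p.1.1 + (x p.1.1 i₀) * t p.1.2)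
      (fun q => t q.1)
    let coef : K → κ → ℝ := Sum.elim
      (fun p k => (if k = p.1.1 then -(x p.1.2 i₀) else 0) + (if k = p.1.2 then x p.1.1 i₀ else 0))
      (fun q k => if k = q.1 then 1 else 0)
    have coefnn : ∀ k' k, 0 ≤ coef k' k := by
      rintro (p | q) k
      · simp only [coef, Sum.elim_inl]
        have h1 : (0:ℝ) ≤ -(x p.1.2 i₀) := by linarith [p.2.2]
        have h2 : (0:ℝ) ≤ x p.1.1 i₀ := le_of_lt p.2.1
        apply add_nonneg <;> (split <;> simp [h1, h2])
      · simp only [coef, Sum.elim_inr]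
        split <;> norm_num
    have key1 : ∀ k' i, x' k' i = ∑ k, coef k' k * x k i := by
      rintro (p | q) i
      · simp only [x', coef, Sum.elim_inl]
        rw [Finset.sum_congr rfl (fun k _ => by
          show ((if k = p.1.1 then -(x p.1.2 i₀) else 0) + (if k = p.1.2 then x p.1.1 i₀ else 0)) * x k i
            = (if k = p.1.1 then -(x p.1.2 i₀) * x k i else 0) + (if k = p.1.2 then x p.1.1 i₀ * x k i else 0)
          split <;> split <;> ring)]
        rw [Finset.sum_add_distrib,
          Finset.sum_ite_eq' Finset.univ p.1.1 (fun k => -(x p.1.2 i₀) * x k i),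
          Finset.sum_ite_eq' Finset.univ p.1.2 (fun k => x p.1.1 i₀ * x k i)]
        simp
      · simp only [x', coef, Sum.elim_inr]
        rw [Finset.sum_congr rfl (fun k _ => by
          show (if k = q.1 then (1:ℝ) else 0) * x k i = if k = q.1 then x k i else 0
          split <;> ring)]
        rw [Finset.sum_ite_eq' Finset.univ q.1 (fun k => x k i)]
        simp
    have key2 : ∀ k', t' k' = ∑ k, coef k' k * t k := by
      rintro (p | q)
      · simp only [t', coef, Sum.elim_inl]
        rw [Finset.sum_congr rfl (fun k _ => by
          show ((if k = p.1.1 then -(x p.1.2 i₀) else 0) + (if k = p.1.2 then x p.1.1 i₀ else 0)) * t k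
            = (if k = p.1.1 then -(x p.1.2 i₀) * t k else 0) + (if k = p.1.2 then x p.1.1 i₀ * t k else 0)
          split <;> split <;> ring)]
        rw [Finset.sum_add_distrib,
          Finset.sum_ite_eq' Finset.univ p.1.1 (fun k => -(x p.1.2 i₀) * t k),
          Finset.sum_ite_eq' Finset.univ p.1.2 (fun k => x p.1.1 i₀ * t k)]
        simp
      · simp only [t', coef, Sum.elim_inr]
        rw [Finset.sum_congr rfl (fun k _ => by
          show (if k = q.1 then (1:ℝ) else 0) * t k = if k = q.1 then t k else 0
          split <;> ring)]
        rw [Finset.sum_ite_eq' Finset.univ q.1 t]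
        simp
    have hsupp' : ∀ k', ∀ i ∉ D', x' k' i = 0 := by
      rintro (p | q) i hi
      · simp only [x', Sum.elim_inl]
        by_cases hii : i = i₀
        · subst hii; ring
        · have hi' : i ∉ insert i₀ D' := by simp [hii, hi]
          rw [hsupp _ _ hi', hsupp _ _ hi']; ring
      · simp only [x', Sum.elim_inr]
        by_cases hii : i = i₀
        · subst hii; exact q.2
        · exact hsupp _ _ (by simp [hii, hi])
    have H' : ∀ μ' : K → ℝ, (∀ k', 0 ≤ μ' k') → (∀ i, ∑ k', μ' k' * x' k' i = 0) →
        ∑ k', μ' k' * t' k' ≤ 0 := by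
      intro μ' hμ'nn hμ'x
      set μ : κ → ℝ := fun k => ∑ k', μ' k' * coef k' k with hμ
      have hμnn : ∀ k, 0 ≤ μ k := fun k =>
        Finset.sum_nonneg fun k' _ => mul_nonneg (hμ'nn k') (coefnn k' k)
      have hswap : ∀ f : κ → ℝ, ∑ k, μ k * f k = ∑ k', μ' k' * ∑ k, coef k' k * f k := by
        intro f
        simp only [hμ, Finset.sum_mul]
        rw [Finset.sum_comm]
        exact Finset.sum_congr rfl fun k' _ => by
          rw [Finset.mul_sum]
          exact Finset.sum_congr rfl fun k _ => by ring
      have hx0 : ∀ i, ∑ k, μ k * x k i = 0 := by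
        intro i
        rw [hswap (fun k => x k i)]
        have e : ∑ k', μ' k' * ∑ k, coef k' k * x k i = ∑ k', μ' k' * x' k' i :=
          Finset.sum_congr rfl fun k' _ => by rw [← key1 k' i]
        rw [e]
        exact hμ'x i
      have hle := H μ hμnn hx0
      calc ∑ k', μ' k' * t' k' = ∑ k', μ' k' * ∑ k, coef k' k * t k :=
            Finset.sum_congr rfl fun k' _ => by rw [key2]
        _ = ∑ k, μ k * t k := (hswap t).symm
        _ ≤ 0 := hle
    obtain ⟨c', hc'⟩ := IH K x' t' hsupp' H'
    -- solve for the i₀-th coefficient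
    set σ : κ → ℝ := fun k => ∑ i, c' i * x k i with hσdef
    set r : κ → ℝ := fun k => (t k - σ k) / (x k i₀) + c' i₀ with hrdef
    have hpair : ∀ k l, 0 < x k i₀ → x l i₀ < 0 → r k ≤ r l := by
      intro k l hk hl
      have h := hc' (Sum.inl ⟨(k, l), hk, hl⟩)
      simp only [x', t', Sum.elim_inl] at h
      have hσ : ∑ i, c' i * ((-(x l i₀)) * x k i + (x k i₀) * x l i)
          = (-(x l i₀)) * σ k + (x k i₀) * σ l := by
        simp only [hσdef]
        rw [Finset.mul_sum, Finset.mul_sum, ← Finset.sum_add_distrib]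
        exact Finset.sum_congr rfl fun i _ => by ring
      rw [hσ] at h
      have hkne : x k i₀ ≠ 0 := ne_of_gt hk
      have hlne : x l i₀ ≠ 0 := ne_of_lt hl
      have hd : 0 < x k i₀ * (-(x l i₀)) := mul_pos hk (by linarith)
      have hkey : (t k - σ k) / x k i₀ - (t l - σ l) / x l i₀
          = ((-(x l i₀)) * (t k - σ k) + (x k i₀) * (t l - σ l)) / (x k i₀ * (-(x l i₀))) := by
        field_simp
        ring
      have hle : (t k - σ k) / x k i₀ - (t l - σ l) / x l i₀ ≤ 0 := by
        rw [hkey]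
        apply div_nonpos_of_nonpos_of_nonneg
        · linarith
        · linarith
      simp only [hrdef]
      linarith
    obtain ⟨γ, hγ1, hγ2⟩ : ∃ γ : ℝ, (∀ k, 0 < x k i₀ → r k ≤ γ) ∧ (∀ l, x l i₀ < 0 → γ ≤ r l) := by
      by_cases hSP : (Finset.univ.filter (fun k => 0 < x k i₀)).Nonempty
      · refine ⟨(Finset.univ.filter (fun k => 0 < x k i₀)).sup' hSP r, ?_, ?_⟩
        · intro k hk
          exact Finset.le_sup' r (Finset.mem_filter.2 ⟨Finset.mem_univ k, hk⟩)
        · intro l hl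
          exact Finset.sup'_le _ _ fun k hk => hpair k l (Finset.mem_filter.1 hk).2 hl
      · by_cases hSN : (Finset.univ.filter (fun k => x k i₀ < 0)).Nonempty
        · refine ⟨(Finset.univ.filter (fun k => x k i₀ < 0)).inf' hSN r, ?_, ?_⟩
          · intro k hk
            exact absurd ⟨k, Finset.mem_filter.2 ⟨Finset.mem_univ k, hk⟩⟩ hSP
          · intro l hl
            exact Finset.inf'_le r (Finset.mem_filter.2 ⟨Finset.mem_univ l, hl⟩)
        · refine ⟨0, ?_, ?_⟩
          · intro k hk
            exact absurd ⟨k, Finset.mem_filter.2 ⟨Finset.mem_univ k, hk⟩⟩ hSP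
          · intro l hl
            exact absurd ⟨l, Finset.mem_filter.2 ⟨Finset.mem_univ l, hl⟩⟩ hSN
    refine ⟨Function.update c' i₀ γ, fun k => ?_⟩
    have hupdate : ∑ i, Function.update c' i₀ γ i * x k i = σ k + (γ - c' i₀) * x k i₀ := by
      have h1 : ∑ i, Function.update c' i₀ γ i * x k i
          = (∑ i ∈ Finset.univ.erase i₀, c' i * x k i) + γ * x k i₀ := by
        rw [← Finset.sum_erase_add _ _ (Finset.mem_univ i₀), Function.update_self]
        congr 1
        exact Finset.sum_congr rfl fun i hi => by
          rw [Function.update_of_ne (Finset.ne_of_mem_erase hi)]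
      have h2 : σ k = (∑ i ∈ Finset.univ.erase i₀, c' i * x k i) + c' i₀ * x k i₀ := by
        simp only [hσdef]
        rw [← Finset.sum_erase_add _ _ (Finset.mem_univ i₀)]
      rw [h1, h2]; ring
    rw [hupdate]
    rcases lt_trichotomy (x k i₀) 0 with h | h | h
    · have := hγ2 k h
      simp only [hrdef] at this
      have h' : γ - c' i₀ ≤ (t k - σ k) / x k i₀ := by linarith
      have := (le_div_iff_of_neg h).1 h'
      linarith
    · have ht := hc' (Sum.inr ⟨k, h⟩)
      simp only [x', t', Sum.elim_inr] at ht
      have : t k ≤ σ k := ht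
      rw [h]
      linarith
    · have := hγ1 k h
      simp only [hrdef] at this
      have h' : (t k - σ k) / x k i₀ ≤ γ - c' i₀ := by linarith
      have := (div_le_iff₀ h).1 h'
      linarith

/-- Supporting hyperplane step in the proof of Claim 1. -/
theorem supporting_hyperplane {Ω A S : Type*} [Fintype Ω] [Nonempty Ω] [Fintype A] [Nonempty A]
    [Fintype S] [Nonempty S] (u v : A → Ω → ℝ) (prior : Ω → ℝ) (hprior : prior ∈ stdSimplex ℝ Ω)
    (lam : S → ℝ) (p : S → Ω → ℝ) (hopt : IsOptimalSplitting u v lam p prior) :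
    ∃ (c : Ω → ℝ) (d : ℝ),
      (∀ π ∈ stdSimplex ℝ Ω, ubar u v π ≤ (∑ ω, c ω * π ω) + d) ∧
      ∀ s, (∑ ω, c ω * p s ω) + d = ubar u v (p s) := by
  classical
  obtain ⟨⟨hlampos, hlamsum, hpΔ, hpavg⟩, hoptim⟩ := hopt
  set M : ℝ := ∑ s, lam s * ubar u v (p s) with hM
  set EP : A → Finset (Ω → ℝ) := fun a => (finite_extremePoints_Pset v a).toFinset with hEP
  have hEPmem : ∀ a, ∀ π ∈ EP a, π ∈ Pset v a := by
    intro a π h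
    exact extremePoints_subset ((finite_extremePoints_Pset v a).mem_toFinset.1 h)
  have Hyp : ∀ μ : (Σ a : A, {π : Ω → ℝ // π ∈ EP a}) → ℝ, (∀ k, 0 ≤ μ k) →
      (∀ i, ∑ k, μ k * ((k.2 : Ω → ℝ) i - prior i) = 0) →
      ∑ k, μ k * (payP u k.1 (k.2 : Ω → ℝ) - M) ≤ 0 := by
    intro μ hμ0 hμx
    have hkP : ∀ k : (Σ a : A, {π : Ω → ℝ // π ∈ EP a}), (k.2 : Ω → ℝ) ∈ Pset v k.1 :=
      fun k => hEPmem k.1 k.2 k.2.2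
    set sσ : ℝ := ∑ k, μ k with hsσ
    have hsσ0 : 0 ≤ sσ := Finset.sum_nonneg fun k _ => hμ0 k
    rcases eq_or_lt_of_le hsσ0 with hz | hpos
    · have hall : ∀ k ∈ Finset.univ, μ k = 0 :=
        (Finset.sum_eq_zero_iff_of_nonneg (fun k _ => hμ0 k)).1 hz.symm
      have hzz : ∑ k, μ k * (payP u k.1 (k.2 : Ω → ℝ) - M) = 0 :=
        Finset.sum_eq_zero fun k hk => by rw [hall k hk, zero_mul]
      rw [hzz]
    · have hex : ∃ k, μ k ≠ 0 := by
        by_contra hno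
        push_neg at hno
        have : sσ = 0 := by rw [hsσ]; exact Finset.sum_eq_zero fun k _ => hno k
        exact absurd this (ne_of_gt hpos)
      obtain ⟨k0, hk0⟩ := hex
      haveI hne : Nonempty {k : (Σ a : A, {π : Ω → ℝ // π ∈ EP a}) // μ k ≠ 0} := ⟨⟨k0, hk0⟩⟩
      set n := Fintype.card {k : (Σ a : A, {π : Ω → ℝ // π ∈ EP a}) // μ k ≠ 0} with hn
      haveI hnpos : Nonempty (Fin n) := ⟨⟨0, Fintype.card_pos⟩⟩
      set e := (Fintype.equivFin {k : (Σ a : A, {π : Ω → ℝ // π ∈ EP a}) // μ k ≠ 0}).symm with he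
      have hsub : ∀ f : (Σ a : A, {π : Ω → ℝ // π ∈ EP a}) → ℝ,
          ∑ t : Fin n, μ (e t).1 * f (e t).1 = ∑ k, μ k * f k := by
        intro f
        rw [Equiv.sum_comp e (fun k' => μ k'.1 * f k'.1)]
        rw [← Finset.sum_subtype (Finset.univ.filter (fun k => μ k ≠ 0))
          (fun k => by simp) (fun k => μ k * f k)]
        exact Finset.sum_filter_of_ne fun k _ h => left_ne_zero_of_mul h
      set mu : Fin n → ℝ := fun t => μ (e t).1 / sσ with hmu
      set q : Fin n → Ω → ℝ := fun t => ((e t).1.2 : Ω → ℝ) with hq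
      have hsplit : IsSplitting mu q prior := by
        refine ⟨?_, ?_, ?_, ?_⟩
        · intro t
          exact div_pos (lt_of_le_of_ne (hμ0 _) (Ne.symm (e t).2)) hpos
        · have h1 : ∑ t : Fin n, μ (e t).1 * (1:ℝ) = ∑ k, μ k * 1 := hsub (fun _ => 1)
          simp only [mul_one] at h1
          simp only [hmu]
          rw [← Finset.sum_div, h1, ← hsσ, div_self (ne_of_gt hpos)]
        · intro t
          exact (hkP (e t).1).1
        · intro ω
          have h2 := hμx ω
          have h3 : ∑ k, μ k * ((k.2 : Ω → ℝ) ω - prior ω)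
              = (∑ k, μ k * (k.2 : Ω → ℝ) ω) - sσ * prior ω := by
            rw [hsσ, Finset.sum_mul, ← Finset.sum_sub_distrib]
            exact Finset.sum_congr rfl fun k _ => by ring
          rw [h3] at h2
          have h4 : ∑ k, μ k * (k.2 : Ω → ℝ) ω = sσ * prior ω := by linarith
          have h5 := hsub (fun k => (k.2 : Ω → ℝ) ω)
          simp only [hmu, hq]
          rw [Finset.sum_congr rfl (fun t _ => div_mul_eq_mul_div (μ (e t).1) sσ _),
            ← Finset.sum_div, h5, h4, mul_comm, mul_div_assoc, div_self (ne_of_gt hpos), mul_one]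
      have hopt2 := hoptim (Fin n) mu q hsplit
      have hchain1 : ∑ k, μ k * (payP u k.1 (k.2 : Ω → ℝ) - M)
          = (∑ k, μ k * payP u k.1 (k.2 : Ω → ℝ)) - sσ * M := by
        rw [hsσ, Finset.sum_mul, ← Finset.sum_sub_distrib]
        exact Finset.sum_congr rfl fun k _ => by ring
      have hchain2 : ∑ k, μ k * payP u k.1 (k.2 : Ω → ℝ)
          ≤ ∑ k, μ k * ubar u v (k.2 : Ω → ℝ) :=
        Finset.sum_le_sum fun k _ => mul_le_mul_of_nonneg_left
          (payP_le_ubar (hkP k).1 (hkP k).2) (hμ0 k)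
      have hchain3 : ∑ k, μ k * ubar u v (k.2 : Ω → ℝ)
          = sσ * ∑ t : Fin n, mu t * ubar u v (q t) := by
        have h6 := hsub (fun k => ubar u v (k.2 : Ω → ℝ))
        rw [Finset.mul_sum]
        rw [← h6]
        refine Finset.sum_congr rfl fun t _ => ?_
        simp only [hmu, hq]
        field_simp
      have hchain4 : sσ * ∑ t : Fin n, mu t * ubar u v (q t) ≤ sσ * M :=
        mul_le_mul_of_nonneg_left hopt2 (le_of_lt hpos)
      linarith
  obtain ⟨c, hc⟩ := fm_lemma (Finset.univ (α := Ω)) (Σ a : A, {π : Ω → ℝ // π ∈ EP a})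
    (fun k => fun ω => (k.2 : Ω → ℝ) ω - prior ω)
    (fun k => payP u k.1 (k.2 : Ω → ℝ) - M)
    (fun k i hi => absurd (Finset.mem_univ i) hi) Hyp
  set d : ℝ := M - ∑ ω, c ω * prior ω with hd
  have hkey : ∀ (a : A), ∀ π ∈ EP a, payP u a π ≤ (∑ ω, c ω * π ω) + d := by
    intro a π hπ
    have h := hc ⟨a, ⟨π, hπ⟩⟩
    have hsub2 : ∑ ω, c ω * (π ω - prior ω)
        = (∑ ω, c ω * π ω) - ∑ ω, c ω * prior ω := by
      rw [← Finset.sum_sub_distrib]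
      exact Finset.sum_congr rfl fun ω _ => by ring
    rw [hsub2] at h
    rw [hd]
    linarith
  have hmain : ∀ π ∈ stdSimplex ℝ Ω, ubar u v π ≤ (∑ ω, c ω * π ω) + d := by
    intro π hπ
    obtain ⟨a, habr, hub⟩ := ubar_attained u v hπ
    have hπP : π ∈ Pset v a := ⟨hπ, habr⟩
    rw [Pset_eq_convexHull v a, ← (finite_extremePoints_Pset v a).coe_toFinset,
      Finset.convexHull_eq] at hπP
    obtain ⟨w, hw0, hw1, hwc⟩ := hπP
    rw [Finset.centerMass_eq_of_sum_1 _ _ hw1] at hwc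
    have hcoord : ∀ ω, π ω = ∑ x ∈ EP a, w x * x ω := by
      intro ω
      rw [← hwc, Finset.sum_apply]
      exact Finset.sum_congr rfl fun x _ => by simp
    have hpay : payP u a π = ∑ x ∈ EP a, w x * payP u a x := by
      calc payP u a π = ∑ ω, (∑ x ∈ EP a, w x * x ω) * u a ω := by
            unfold payP
            exact Finset.sum_congr rfl fun ω _ => by rw [← hcoord ω]
        _ = ∑ ω, ∑ x ∈ EP a, w x * (x ω * u a ω) := Finset.sum_congr rfl fun ω _ => by
            rw [Finset.sum_mul]
            exact Finset.sum_congr rfl fun x _ => by ring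
        _ = ∑ x ∈ EP a, ∑ ω, w x * (x ω * u a ω) := Finset.sum_comm
        _ = ∑ x ∈ EP a, w x * payP u a x := Finset.sum_congr rfl fun x _ => by
            unfold payP
            rw [Finset.mul_sum]
    have hlin : ∑ x ∈ EP a, w x * ((∑ ω, c ω * x ω) + d) = (∑ ω, c ω * π ω) + d := by
      have e1 : ∑ x ∈ EP a, w x * ((∑ ω, c ω * x ω) + d)
          = (∑ x ∈ EP a, w x * ∑ ω, c ω * x ω) + (∑ x ∈ EP a, w x) * d := by
        rw [Finset.sum_congr rfl (fun x _ => mul_add (w x) _ d), Finset.sum_add_distrib,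
          Finset.sum_mul]
      have e2 : ∑ x ∈ EP a, w x * ∑ ω, c ω * x ω = ∑ ω, c ω * π ω := by
        calc ∑ x ∈ EP a, w x * ∑ ω, c ω * x ω = ∑ x ∈ EP a, ∑ ω, c ω * (w x * x ω) := by
              refine Finset.sum_congr rfl fun x _ => ?_
              rw [Finset.mul_sum]
              exact Finset.sum_congr rfl fun ω _ => by ring
          _ = ∑ ω, ∑ x ∈ EP a, c ω * (w x * x ω) := Finset.sum_comm
          _ = ∑ ω, c ω * π ω := Finset.sum_congr rfl fun ω _ => by
              rw [← Finset.mul_sum, ← hcoord ω]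
      rw [e1, e2, hw1, one_mul]
    rw [hub, hpay, ← hlin]
    exact Finset.sum_le_sum fun x hx =>
      mul_le_mul_of_nonneg_left (hkey a x hx) (hw0 x hx)
  refine ⟨c, d, hmain, ?_⟩
  have hsum1 : ∑ s, lam s * ((∑ ω, c ω * p s ω) + d) = M := by
    have h1 : ∑ s, lam s * (∑ ω, c ω * p s ω) = ∑ ω, c ω * prior ω := by
      calc ∑ s, lam s * (∑ ω, c ω * p s ω) = ∑ s, ∑ ω, c ω * (lam s * p s ω) := by
            refine Finset.sum_congr rfl fun s _ => ?_
            rw [Finset.mul_sum]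
            exact Finset.sum_congr rfl fun ω _ => by ring
        _ = ∑ ω, ∑ s, c ω * (lam s * p s ω) := Finset.sum_comm
        _ = ∑ ω, c ω * prior ω := Finset.sum_congr rfl fun ω _ => by
            rw [← Finset.mul_sum, hpavg ω]
    calc ∑ s, lam s * ((∑ ω, c ω * p s ω) + d)
        = (∑ s, lam s * (∑ ω, c ω * p s ω)) + (∑ s, lam s) * d := by
          rw [Finset.sum_congr rfl (fun s _ => mul_add (lam s) _ d), Finset.sum_add_distrib,
            Finset.sum_mul]
      _ = M := by rw [h1, hlamsum, one_mul, hd]; ring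
  have hterm : ∀ s ∈ Finset.univ (α := S),
      lam s * (((∑ ω, c ω * p s ω) + d) - ubar u v (p s)) = 0 := by
    refine (Finset.sum_eq_zero_iff_of_nonneg ?_).1 ?_
    · intro s _
      exact mul_nonneg (le_of_lt (hlampos s)) (by linarith [hmain (p s) (hpΔ s)])
    · have h2 : ∑ s, lam s * (((∑ ω, c ω * p s ω) + d) - ubar u v (p s))
          = (∑ s, lam s * ((∑ ω, c ω * p s ω) + d)) - ∑ s, lam s * ubar u v (p s) := by
        rw [← Finset.sum_sub_distrib]
        exact Finset.sum_congr rfl fun s _ => by ring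
      rw [h2, hsum1, ← hM]
      ring
  intro s
  have h3 := hterm s (Finset.mem_univ s)
  rcases mul_eq_zero.1 h3 with h | h
  · exact absurd h (ne_of_gt (hlampos s))
  · linarith
end

section
/- [Remark 6: pairwise uniform punishment] Let (λ_s, π_s)_{s∈S} be an optimal splitting of the prior π° ∈ Δ(Ω). Then for every pair s, s' ∈ S there exist t ∈ [0,1] and a mixed action α ∈ BR(t·π_s + (1−t)·π_{s'}) such that u(α, π_s) ≤ ū(π_s) and u(α, π_{s'}) ≤ ū(π_{s'}). -/
open Finset

variable {Ω A : Type*}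

section Helpers

variable {Ω A : Type*} [Fintype Ω] [Fintype A]

lemma pay_right_comb (u : A → Ω → ℝ) (α : A → ℝ) (t t' : ℝ) (π ρ : Ω → ℝ) :
    pay u α (fun ω => t * π ω + t' * ρ ω) = t * pay u α π + t' * pay u α ρ := by
  simp only [pay, Finset.mul_sum, ← Finset.sum_add_distrib]
  exact Finset.sum_congr rfl fun a _ => Finset.sum_congr rfl fun ω _ => by ring

lemma pay_left_comb (u : A → Ω → ℝ) (θ θ' : ℝ) (α β : A → ℝ) (π : Ω → ℝ) :
    pay u (fun a => θ * α a + θ' * β a) π = θ * pay u α π + θ' * pay u β π := by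
  simp only [pay, Finset.mul_sum, ← Finset.sum_add_distrib]
  exact Finset.sum_congr rfl fun a _ => Finset.sum_congr rfl fun ω _ => by ring

lemma continuous_pay (u : A → Ω → ℝ) (π : Ω → ℝ) : Continuous fun α : A → ℝ => pay u α π := by
  unfold pay; continuity

lemma stdSimplex_ne [Nonempty A] : (stdSimplex ℝ A).Nonempty := by
  classical
  obtain ⟨a⟩ := ‹Nonempty A›
  exact ⟨fun a' => if a' = a then 1 else 0, fun a' => by positivity, by simp⟩

lemma BR_ne [Nonempty A] (v : A → Ω → ℝ) (π : Ω → ℝ) : (BR v π).Nonempty := by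
  obtain ⟨α₀, h₀, hmax⟩ := (isCompact_stdSimplex ℝ A).exists_isMaxOn stdSimplex_ne
    (continuous_pay v π).continuousOn
  exact ⟨α₀, h₀, fun α' hα' => hmax hα'⟩

lemma isCompact_BR (v : A → Ω → ℝ) (π : Ω → ℝ) : IsCompact (BR v π) := by
  refine IsCompact.of_isClosed_subset (isCompact_stdSimplex ℝ A) ?_ (fun α hα => hα.1)
  have : BR v π = stdSimplex ℝ A ∩ ⋂ α' ∈ stdSimplex ℝ A, {α | pay v α' π ≤ pay v α π} := by
    ext α; simp [BR, Set.mem_iInter]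
  rw [this]
  exact (isClosed_stdSimplex ℝ A).inter <| isClosed_biInter fun α' _ =>
    isClosed_le continuous_const (continuous_pay v π)

lemma le_ubar [Nonempty A] (u v : A → Ω → ℝ) (π : Ω → ℝ) {α : A → ℝ} (hα : α ∈ BR v π) :
    pay u α π ≤ ubar u v π := by
  refine le_csSup ?_ ⟨α, hα, rfl⟩
  exact ((isCompact_BR v π).image (continuous_pay u π)).bddAbove

lemma exists_ubar_max [Nonempty A] (u v : A → Ω → ℝ) (π : Ω → ℝ) :
    ∃ β ∈ BR v π, pay u β π = ubar u v π := by
  have hne := BR_ne (A := A) v π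
  have : ubar u v π ∈ (fun α => pay u α π) '' BR v π :=
    ((isCompact_BR v π).image (continuous_pay u π)).sSup_mem (hne.image _)
  obtain ⟨β, hβ, hb⟩ := this
  exact ⟨β, hβ, hb⟩

lemma BR_convex (v : A → Ω → ℝ) (π : Ω → ℝ) {α β : A → ℝ} (hα : α ∈ BR v π) (hβ : β ∈ BR v π)
    {θ : ℝ} (h0 : 0 ≤ θ) (h1 : θ ≤ 1) : (fun a => θ * α a + (1 - θ) * β a) ∈ BR v π := by
  refine ⟨?_, fun α' hα' => ?_⟩
  · have h1' : (0:ℝ) ≤ 1 - θ := by linarith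
    have := (convex_stdSimplex ℝ A) hα.1 hβ.1 h0 h1' (by ring)
    have heq : (fun a => θ * α a + (1 - θ) * β a) = θ • α + (1 - θ) • β := by
      funext a; simp [Pi.add_apply, smul_eq_mul]
    rw [heq]; exact this
  · rw [pay_left_comb]
    calc pay v α' π = θ * pay v α' π + (1 - θ) * pay v α' π := by ring
    _ ≤ θ * pay v α π + (1 - θ) * pay v β π := by
        have := hα.2 α' hα'; have := hβ.2 α' hα'; nlinarith

lemma ubar_seg_le {S : Type*} [Fintype S] (u v : A → Ω → ℝ) (prior : Ω → ℝ)
    (lam : S → ℝ) (p : S → Ω → ℝ) (hopt : IsOptimalSplitting u v lam p prior)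
    (s s' : S) {t : ℝ} (ht0 : 0 ≤ t) (ht1 : t ≤ 1) :
    ubar u v (fun ω => t * p s ω + (1 - t) * p s' ω)
      ≤ t * ubar u v (p s) + (1 - t) * ubar u v (p s') := by
  classical
  obtain ⟨⟨hpos, hsum, hmem, hbar⟩, hoptimal⟩ := hopt
  set π : Ω → ℝ := fun ω => t * p s ω + (1 - t) * p s' ω with hπ
  set ε : ℝ := min (lam s) (lam s') / 2 with hε
  have hε0 : 0 < ε := half_pos (lt_min (hpos s) (hpos s'))
  have hεs : ε < lam s := lt_of_lt_of_le (by linarith [min_le_left (lam s) (lam s')] : ε < min (lam s) (lam s')) (min_le_left _ _)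
  have hεs' : ε < lam s' := lt_of_lt_of_le (by linarith [min_le_right (lam s) (lam s')] : ε < min (lam s) (lam s')) (min_le_right _ _)
  set g : S → ℝ := fun x => lam x - (if x = s then ε * t else 0) - (if x = s' then ε * (1 - t) else 0) with hg
  set n := Fintype.card S with hn
  set e : S ≃ Fin n := Fintype.equivFin S with he
  set mu : Option (Fin n) → ℝ := fun x => Option.rec ε (fun i => g (e.symm i)) x with hmu
  set q : Option (Fin n) → Ω → ℝ := fun x => Option.rec π (fun i => p (e.symm i)) x with hq
  have hgsum : ∀ f : S → ℝ, ∑ x, g x * f x = (∑ x, lam x * f x) - ε * t * f s - ε * (1 - t) * f s' := by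
    intro f
    simp only [hg, sub_mul, ite_mul, zero_mul, Finset.sum_sub_distrib, Finset.sum_ite_eq',
      Finset.mem_univ, if_true]
  have hsplit : IsSplitting mu q prior := by
    refine ⟨?_, ?_, ?_, ?_⟩
    · rintro (_ | i)
      · exact hε0
      · show 0 < g (e.symm i)
        have key : ∀ x : S, 0 < g x := by
          intro x
          have e1 : (0:ℝ) ≤ ε * t := by positivity
          have e2 : (0:ℝ) ≤ ε * (1 - t) := by nlinarith
          have hεt : ε * t + ε * (1 - t) = ε := by ring
          by_cases hx1 : x = s
          · by_cases hx2 : x = s'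
            · have hss : s = s' := hx1.symm.trans hx2
              simp only [hg, hx1, hss, if_pos rfl, if_true, eq_self_iff_true]
              linarith [hεs', hεt]
            · have hss : ¬ (s = s') := fun h => hx2 (hx1.trans h)
              simp only [hg, hx1, if_pos rfl, if_neg hss, if_true, eq_self_iff_true]
              linarith [hεs, hεt, e2]
          · by_cases hx2 : x = s'
            · have hss : ¬ (s' = s) := fun h => hx1 (hx2.trans h)
              simp only [hg, hx2, if_neg hss, if_pos rfl, if_true, eq_self_iff_true]
              linarith [hεs', hεt, e1]
            · simp only [hg, if_neg hx1, if_neg hx2]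
              linarith [hpos x]
        exact key _
    · rw [Fintype.sum_option]
      have : ∑ i : Fin n, mu (some i) = ∑ x : S, g x := Equiv.sum_comp e.symm g
      rw [this]
      have := hgsum (fun _ => 1)
      simp only [mul_one] at this
      rw [this, hsum]; ring
    · rintro (_ | i)
      · constructor
        · intro ω
          have h1 := (hmem s).1 ω; have h2 := (hmem s').1 ω
          show 0 ≤ t * p s ω + (1 - t) * p s' ω
          nlinarith
        · show ∑ ω, (t * p s ω + (1 - t) * p s' ω) = 1
          rw [Finset.sum_add_distrib, ← Finset.mul_sum, ← Finset.mul_sum,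
            (hmem s).2, (hmem s').2]; ring
      · exact hmem (e.symm i)
    · intro ω
      rw [Fintype.sum_option]
      have : ∑ i : Fin n, mu (some i) * q (some i) ω = ∑ x : S, g x * p x ω :=
        Equiv.sum_comp e.symm (fun x => g x * p x ω)
      rw [this, hgsum (fun x => p x ω), hbar ω]
      show ε * (t * p s ω + (1 - t) * p s' ω) + _ = prior ω
      ring
  have hineq := hoptimal (Option (Fin n)) mu q hsplit
  rw [Fintype.sum_option] at hineq
  have : ∑ i : Fin n, mu (some i) * ubar u v (q (some i)) = ∑ x : S, g x * ubar u v (p x) :=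
    Equiv.sum_comp e.symm (fun x => g x * ubar u v (p x))
  rw [this, hgsum (fun x => ubar u v (p x))] at hineq
  have key : ε * ubar u v π ≤ ε * (t * ubar u v (p s) + (1 - t) * ubar u v (p s')) := by
    have : mu none * ubar u v (q none) = ε * ubar u v π := rfl
    rw [this] at hineq; nlinarith [hineq]
  exact le_of_mul_le_mul_left (by linarith) hε0

end Helpers

/-- Remark 6: pairwise uniform punishment. -/
theorem pairwise_uniform_punishment {Ω A S : Type*} [Fintype Ω] [Nonempty Ω]
    [Fintype A] [Nonempty A] [Fintype S] [Nonempty S]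
    (u v : A → Ω → ℝ) (prior : Ω → ℝ) (hprior : prior ∈ stdSimplex ℝ Ω)
    (lam : S → ℝ) (p : S → Ω → ℝ) (hopt : IsOptimalSplitting u v lam p prior) :
    ∀ s s' : S, ∃ t ∈ Set.Icc (0 : ℝ) 1,
      ∃ α ∈ BR v (fun ω => t * p s ω + (1 - t) * p s' ω),
        pay u α (p s) ≤ ubar u v (p s) ∧ pay u α (p s') ≤ ubar u v (p s') := by
  classical
  intro s s'
  by_contra hcon
  push_neg at hcon
  set πt : ℝ → Ω → ℝ := fun t ω => t * p s ω + (1 - t) * p s' ω with hπt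
  have hπ1 : πt 1 = p s := by funext ω; show (1:ℝ) * p s ω + (1 - 1) * p s' ω = p s ω; ring
  have hπ0 : πt 0 = p s' := by funext ω; show (0:ℝ) * p s ω + (1 - 0) * p s' ω = p s' ω; ring
  have hcont : ∀ w : A → Ω → ℝ, Continuous fun q : ℝ × (A → ℝ) => pay w q.2 (πt q.1) := by
    intro w
    have heq : (fun q : ℝ × (A → ℝ) => pay w q.2 (πt q.1))
        = fun q => q.1 * pay w q.2 (p s) + (1 - q.1) * pay w q.2 (p s') := by
      funext q; exact pay_right_comb w q.2 q.1 (1 - q.1) (p s) (p s')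
    rw [heq]
    exact (continuous_fst.mul ((continuous_pay w (p s)).comp continuous_snd)).add
      ((continuous_const.sub continuous_fst).mul ((continuous_pay w (p s')).comp continuous_snd))
  have hcont1 : ∀ (α' : A → ℝ), Continuous fun q : ℝ × (A → ℝ) => pay v α' (πt q.1) := by
    intro α'
    have heq : (fun q : ℝ × (A → ℝ) => pay v α' (πt q.1))
        = fun q => q.1 * pay v α' (p s) + (1 - q.1) * pay v α' (p s') := by
      funext q; exact pay_right_comb v α' q.1 (1 - q.1) (p s) (p s')
    rw [heq]
    exact (continuous_fst.mul continuous_const).add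
      ((continuous_const.sub continuous_fst).mul continuous_const)
  have hCclosed : ∀ ρ : Ω → ℝ, IsClosed {q : ℝ × (A → ℝ) | q.1 ∈ Set.Icc (0:ℝ) 1 ∧
      q.2 ∈ BR v (πt q.1) ∧ pay u q.2 ρ ≤ ubar u v ρ} := by
    intro ρ
    have heq : {q : ℝ × (A → ℝ) | q.1 ∈ Set.Icc (0:ℝ) 1 ∧ q.2 ∈ BR v (πt q.1) ∧
          pay u q.2 ρ ≤ ubar u v ρ}
        = (Prod.fst ⁻¹' Set.Icc (0:ℝ) 1) ∩ ((Prod.snd ⁻¹' stdSimplex ℝ A)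
          ∩ ((⋂ α' ∈ stdSimplex ℝ A, {q : ℝ × (A → ℝ) | pay v α' (πt q.1) ≤ pay v q.2 (πt q.1)})
          ∩ {q : ℝ × (A → ℝ) | pay u q.2 ρ ≤ ubar u v ρ})) := by
      ext q
      simp only [Set.mem_inter_iff, Set.mem_preimage, Set.mem_iInter, Set.mem_setOf_eq, BR,
        Set.mem_sep_iff]
      tauto
    rw [heq]
    refine (isClosed_Icc.preimage continuous_fst).inter
      (((isClosed_stdSimplex ℝ A).preimage continuous_snd).inter (IsClosed.inter ?_ ?_))
    · exact isClosed_biInter fun α' _ => isClosed_le (hcont1 α') (hcont v)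
    · exact isClosed_le ((continuous_pay u ρ).comp continuous_snd) continuous_const
  have hCcpt : ∀ ρ : Ω → ℝ, IsCompact {q : ℝ × (A → ℝ) | q.1 ∈ Set.Icc (0:ℝ) 1 ∧
      q.2 ∈ BR v (πt q.1) ∧ pay u q.2 ρ ≤ ubar u v ρ} := fun ρ =>
    IsCompact.of_isClosed_subset (isCompact_Icc.prod (isCompact_stdSimplex ℝ A)) (hCclosed ρ)
      (fun q hq => ⟨hq.1, hq.2.1.1⟩)
  set SA := Prod.fst '' {q : ℝ × (A → ℝ) | q.1 ∈ Set.Icc (0:ℝ) 1 ∧ q.2 ∈ BR v (πt q.1) ∧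
    pay u q.2 (p s) ≤ ubar u v (p s)} with hSA
  set SB := Prod.fst '' {q : ℝ × (A → ℝ) | q.1 ∈ Set.Icc (0:ℝ) 1 ∧ q.2 ∈ BR v (πt q.1) ∧
    pay u q.2 (p s') ≤ ubar u v (p s')} with hSB
  have hSAc : IsClosed SA := ((hCcpt (p s)).image continuous_fst).isClosed
  have hSBc : IsClosed SB := ((hCcpt (p s')).image continuous_fst).isClosed
  have hseg : ∀ t : ℝ, 0 ≤ t → t ≤ 1 →
      ubar u v (πt t) ≤ t * ubar u v (p s) + (1 - t) * ubar u v (p s') :=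
    fun t h0 h1 => ubar_seg_le u v prior lam p hopt s s' h0 h1
  have hcover : Set.Icc (0:ℝ) 1 ⊆ SA ∪ SB := by
    intro t ht
    obtain ⟨β, hβ, hβmax⟩ := exists_ubar_max u v (πt t)
    have hsplitpay : pay u β (πt t) = t * pay u β (p s) + (1 - t) * pay u β (p s') :=
      pay_right_comb u β t (1 - t) (p s) (p s')
    by_cases hX : pay u β (p s) ≤ ubar u v (p s)
    · exact Or.inl ⟨(t, β), ⟨ht, hβ, hX⟩, rfl⟩
    · rcases eq_or_lt_of_le ht.2 with h1 | h1
      · exfalso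
        rw [h1, hπ1] at hβ
        exact hX (le_ubar u v (p s) hβ)
      · refine Or.inr ⟨(t, β), ⟨ht, hβ, ?_⟩, rfl⟩
        have h2 := hseg t ht.1 ht.2
        rw [← hβmax, hsplitpay] at h2
        have hX' := not_le.mp hX
        have p1 : 0 ≤ t * (pay u β (p s) - ubar u v (p s)) :=
          mul_nonneg ht.1 (by linarith)
        by_contra hcon2
        have p2 : 0 < (1 - t) * (pay u β (p s') - ubar u v (p s')) :=
          mul_pos (by linarith) (by linarith [not_le.mp hcon2])
        nlinarith [h2, p1, p2]
  have h1A : (Set.Icc (0:ℝ) 1 ∩ SA).Nonempty := by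
    obtain ⟨β, hβ, hβmax⟩ := exists_ubar_max u v (p s)
    refine ⟨1, Set.mem_Icc.mpr ⟨by norm_num, le_refl 1⟩,
      (1, β), ⟨⟨by norm_num, le_refl 1⟩, ?_, le_of_eq hβmax⟩, rfl⟩
    rw [hπ1]; exact hβ
  have h0B : (Set.Icc (0:ℝ) 1 ∩ SB).Nonempty := by
    obtain ⟨β, hβ, hβmax⟩ := exists_ubar_max u v (p s')
    refine ⟨0, Set.mem_Icc.mpr ⟨le_refl 0, by norm_num⟩,
      (0, β), ⟨⟨le_refl 0, by norm_num⟩, ?_, le_of_eq hβmax⟩, rfl⟩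
    rw [hπ0]; exact hβ
  obtain ⟨t₀, ht₀Icc, ht₀A, ht₀B⟩ :=
    (isPreconnected_closed_iff.mp isPreconnected_Icc) SA SB hSAc hSBc hcover h1A h0B
  obtain ⟨qA, hqA, hqA1⟩ := ht₀A
  obtain ⟨qB, hqB, hqB1⟩ := ht₀B
  have hαBR : qA.2 ∈ BR v (πt t₀) := by rw [← hqA1]; exact hqA.2.1
  have hA : pay u qA.2 (p s) ≤ ubar u v (p s) := hqA.2.2
  have hβBR : qB.2 ∈ BR v (πt t₀) := by rw [← hqB1]; exact hqB.2.1
  have hB : pay u qB.2 (p s') ≤ ubar u v (p s') := hqB.2.2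
  have hαB : ubar u v (p s') < pay u qA.2 (p s') := hcon t₀ ht₀Icc qA.2 hαBR hA
  have hβA : ubar u v (p s) < pay u qB.2 (p s) := by
    by_contra h
    exact absurd hB (not_le.mpr (hcon t₀ ht₀Icc qB.2 hβBR (not_lt.mp h)))
  rcases eq_or_lt_of_le ht₀Icc.2 with h1 | h1
  · rw [h1, hπ1] at hβBR
    exact absurd (le_ubar u v (p s) hβBR) (not_le.mpr hβA)
  · have hba : pay u qA.2 (p s) < pay u qB.2 (p s) := lt_of_le_of_lt hA hβA
    set a := pay u qA.2 (p s) with ha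
    set b := pay u qB.2 (p s) with hb
    set c := ubar u v (p s) with hc
    set θ : ℝ := (b - c) / (b - a) with hθ
    have hden : 0 < b - a := by linarith
    have hθ0 : 0 ≤ θ := div_nonneg (by linarith) (le_of_lt hden)
    have hθ1 : θ ≤ 1 := (div_le_one hden).mpr (by linarith)
    have hγBR : (fun x => θ * qA.2 x + (1 - θ) * qB.2 x) ∈ BR v (πt t₀) :=
      BR_convex v (πt t₀) hαBR hβBR hθ0 hθ1
    have hγs : pay u (fun x => θ * qA.2 x + (1 - θ) * qB.2 x) (p s) = c := by
      rw [pay_left_comb]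
      show θ * a + (1 - θ) * b = c
      rw [hθ]
      field_simp
      ring
    have hγIcc := le_ubar u v (πt t₀) hγBR
    have hseg0 := hseg t₀ ht₀Icc.1 ht₀Icc.2
    have hsp : pay u (fun x => θ * qA.2 x + (1 - θ) * qB.2 x) (πt t₀)
        = t₀ * pay u (fun x => θ * qA.2 x + (1 - θ) * qB.2 x) (p s)
          + (1 - t₀) * pay u (fun x => θ * qA.2 x + (1 - θ) * qB.2 x) (p s') :=
      pay_right_comb u _ t₀ (1 - t₀) (p s) (p s')
    have hγs' : pay u (fun x => θ * qA.2 x + (1 - θ) * qB.2 x) (p s') ≤ ubar u v (p s') := by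
      by_contra hcon2
      have p2 : 0 < (1 - t₀) * (pay u (fun x => θ * qA.2 x + (1 - θ) * qB.2 x) (p s')
          - ubar u v (p s')) := mul_pos (by linarith) (by linarith [not_le.mp hcon2])
      rw [hsp, hγs] at hγIcc
      linarith [hγIcc, hseg0, p2]
    exact absurd hγs' (not_le.mpr (hcon t₀ ht₀Icc _ hγBR (le_of_eq hγs)))
end

section
/- [Remark 5, implication (i)] Assume there are no redundant actions for the decision-maker. Then for every a ∈ Â, the set BR⁻¹(a) := {π ∈ Δ(Ω) : v(a,π) = v̄(π)} has full dimension: its affine span equals the affine span of Δ(Ω) (i.e., it has dimension |Ω| − 1 as a subset of the simplex). -/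
open Finset

variable {Ω A : Type*}

/-- Beliefs at which `a` is optimal for the decision-maker. -/
def BRinv [Fintype Ω] [Fintype A] (v : A → Ω → ℝ) (a : A) : Set (Ω → ℝ) :=
  {π ∈ stdSimplex ℝ Ω | payP v a π = vbar v π}

/-- No redundant actions for the decision-maker. -/
def NoRedundantDM [Fintype Ω] [Fintype A] (v : A → Ω → ℝ) : Prop :=
  ∀ B : Set A, B.Nonempty → B ⊂ Ahat v →
    ∃ π ∈ stdSimplex ℝ Ω, ∀ a ∈ B, payP v a π < vbar v π

/-- No redundant actions for the experts. -/
def NoRedundantExperts [Fintype Ω] (u : A → Ω → ℝ) : Prop :=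
  ∀ a a' : A, a ≠ a' → ∃ ω, u a ω ≠ u a' ω

/-- The expert value function `ū` is concave on the simplex. -/
def UbarConcave [Fintype Ω] [Fintype A] (u v : A → Ω → ℝ) : Prop :=
  ∀ π ∈ stdSimplex ℝ Ω, ∀ π' ∈ stdSimplex ℝ Ω, ∀ t ∈ Set.Icc (0 : ℝ) 1,
    t * ubar u v π + (1 - t) * ubar u v π' ≤ ubar u v (fun ω => t * π ω + (1 - t) * π' ω)

section AuxBR
variable [Fintype Ω] [Fintype A] [Nonempty A]

lemma payP_le_vbar' (v : A → Ω → ℝ) (a : A) (π : Ω → ℝ) : payP v a π ≤ vbar v π := by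
  unfold vbar
  exact le_ciSup (Set.Finite.bddAbove (Set.finite_range (fun a => payP v a π))) a

lemma vbar_eq_of_br' (v : A → Ω → ℝ) {a : A} {π : Ω → ℝ} (h : a ∈ br v π) :
    payP v a π = vbar v π :=
  le_antisymm (payP_le_vbar' v a π) (ciSup_le fun a' => h a')

lemma br_nonempty' (v : A → Ω → ℝ) (π : Ω → ℝ) : ∃ a, a ∈ br v π := by
  obtain ⟨a, ha⟩ := Finite.exists_max (fun a => payP v a π)
  exact ⟨a, ha⟩

lemma payP_comb' [DecidableEq Ω] (v : A → Ω → ℝ) (b : A) (π₀ : Ω → ℝ) (ε : ℝ) (ω : Ω) :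
    payP v b (fun ω' => (1-ε) * π₀ ω' + ε * (if ω' = ω then (1:ℝ) else 0)) =
      (1-ε) * payP v b π₀ + ε * v b ω := by
  have key : ∀ ω' : Ω, ((1-ε) * π₀ ω' + ε * (if ω' = ω then (1:ℝ) else 0)) * v b ω'
      = (1-ε) * (π₀ ω' * v b ω') + ε * (if ω' = ω then v b ω' else 0) := by
    intro ω'; split <;> ring
  simp only [payP, key, Finset.sum_add_distrib, ← Finset.mul_sum,
    Finset.sum_ite_eq' Finset.univ ω, Finset.mem_univ, if_true]

end AuxBR

/-- Remark 5, implication (i): each `BR⁻¹(a)`, `a ∈ Â`, has full dimension. -/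
theorem BRinv_full_dimensional {Ω A : Type*} [Fintype Ω] [Nonempty Ω] [Fintype A] [Nonempty A]
    (u v : A → Ω → ℝ) (hnr : NoRedundantDM v) :
    ∀ a ∈ Ahat v, affineSpan ℝ (BRinv v a) = affineSpan ℝ (stdSimplex ℝ Ω) := by
  intro a ha
  classical
  -- Step 1: find π₀ where a is strictly optimal
  have hstrict : ∃ π₀ ∈ stdSimplex ℝ Ω, ∀ a', a' ≠ a → payP v a' π₀ < payP v a π₀ := by
    by_cases hB : (Ahat v \ {a}).Nonempty
    · have hss : Ahat v \ {a} ⊂ Ahat v := by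
        refine ⟨Set.diff_subset, fun hsub => ?_⟩
        exact (hsub ha).2 rfl
      obtain ⟨π₀, hπ₀, h⟩ := hnr (Ahat v \ {a}) hB hss
      obtain ⟨a₀, ha₀⟩ := br_nonempty' v π₀
      have ha₀hat : a₀ ∈ Ahat v := ⟨π₀, hπ₀, ha₀⟩
      have haa : a₀ = a := by
        by_contra hne
        have h1 := h a₀ ⟨ha₀hat, hne⟩
        rw [vbar_eq_of_br' v ha₀] at h1
        exact lt_irrefl _ h1
      subst haa
      refine ⟨π₀, hπ₀, fun a' hne => ?_⟩
      by_cases h' : a' ∈ br v π₀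
      · have h1 := h a' ⟨⟨π₀, hπ₀, h'⟩, hne⟩
        rw [vbar_eq_of_br' v h'] at h1
        exact absurd h1 (lt_irrefl _)
      · simp only [br, Set.mem_setOf_eq, not_forall, not_le] at h'
        obtain ⟨a'', h''⟩ := h'
        exact lt_of_lt_of_le h'' (ha₀ a'')
    · -- Ahat v ⊆ {a}
      have hsub : Ahat v ⊆ {a} := by
        intro x hx
        by_contra hne
        exact hB ⟨x, hx, hne⟩
      obtain ⟨ω₀⟩ := ‹Nonempty Ω›
      set π₀ : Ω → ℝ := fun ω' => if ω' = ω₀ then 1 else 0 with hπ₀def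
      have hπ₀ : π₀ ∈ stdSimplex ℝ Ω := by
        constructor
        · intro ω'; simp only [hπ₀def]; split <;> norm_num
        · simp [hπ₀def, Finset.sum_ite_eq' Finset.univ ω₀]
      obtain ⟨a₀, ha₀⟩ := br_nonempty' v π₀
      have haa : a₀ = a := hsub ⟨π₀, hπ₀, ha₀⟩
      subst haa
      refine ⟨π₀, hπ₀, fun a' hne => ?_⟩
      have h' : a' ∉ br v π₀ := fun h'' => hne (hsub ⟨π₀, hπ₀, h''⟩)
      simp only [br, Set.mem_setOf_eq, not_forall, not_le] at h'
      obtain ⟨a'', h''⟩ := h'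
      exact lt_of_lt_of_le h'' (ha₀ a'')
  obtain ⟨π₀, hπ₀, hstr⟩ := hstrict
  have habr : ∀ a', payP v a' π₀ ≤ payP v a π₀ := by
    intro a'
    rcases eq_or_ne a' a with rfl | h
    · exact le_rfl
    · exact (hstr a' h).le
  -- Step 2: choose ε
  have hev : ∀ᶠ ε in nhdsWithin 0 (Set.Ioi (0:ℝ)), ∀ p : A × Ω,
      (1-ε) * payP v p.1 π₀ + ε * v p.1 p.2 ≤ (1-ε) * payP v a π₀ + ε * v a p.2 := by
    rw [Filter.eventually_all]
    intro p
    rcases eq_or_ne p.1 a with h | h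
    · filter_upwards with ε
      rw [h]
    · have hc : Continuous (fun ε : ℝ =>
          ((1-ε) * payP v a π₀ + ε * v a p.2) - ((1-ε) * payP v p.1 π₀ + ε * v p.1 p.2)) := by
        fun_prop
      have h0 : (0:ℝ) <
          ((1-(0:ℝ)) * payP v a π₀ + 0 * v a p.2) - ((1-(0:ℝ)) * payP v p.1 π₀ + 0 * v p.1 p.2) := by
        have := hstr p.1 h
        simp only [sub_zero, one_mul, zero_mul, add_zero]
        linarith
      have ht := (hc.tendsto 0).mono_left (nhdsWithin_le_nhds (s := Set.Ioi (0:ℝ)))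
      have := ht.eventually_const_lt h0
      filter_upwards [this] with ε hε
      linarith
  have hev2 : ∀ᶠ ε in nhdsWithin 0 (Set.Ioi (0:ℝ)), ε < 1 :=
    eventually_nhdsWithin_of_eventually_nhds (Filter.Tendsto.eventually_lt_const one_pos Filter.tendsto_id)
  have hev3 : ∀ᶠ ε in nhdsWithin 0 (Set.Ioi (0:ℝ)), (0:ℝ) < ε :=
    eventually_mem_nhdsWithin
  obtain ⟨ε, hεs, hε1, hε0⟩ := (hev.and (hev2.and hev3)).exists
  -- Step 3: the perturbed beliefs
  set e : Ω → Ω → ℝ := fun ω ω' => if ω' = ω then 1 else 0 with hedef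
  set q : Ω → Ω → ℝ := fun ω ω' => (1-ε) * π₀ ω' + ε * e ω ω' with hqdef
  have hq : ∀ ω, q ω ∈ stdSimplex ℝ Ω := by
    intro ω
    constructor
    · intro ω'
      apply add_nonneg
      · exact mul_nonneg (by linarith) (hπ₀.1 ω')
      · apply mul_nonneg hε0.le
        simp only [hedef]; split <;> norm_num
    · simp only [hqdef, hedef, Finset.sum_add_distrib, ← Finset.mul_sum, hπ₀.2,
        Finset.sum_ite_eq' Finset.univ ω, Finset.mem_univ, if_true]
      ring
  have hqbr : ∀ ω, a ∈ br v (q ω) := by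
    intro ω a'
    have h1 : payP v a' (q ω) = (1-ε) * payP v a' π₀ + ε * v a' ω := payP_comb' v a' π₀ ε ω
    have h2 : payP v a (q ω) = (1-ε) * payP v a π₀ + ε * v a ω := payP_comb' v a π₀ ε ω
    rw [h1, h2]
    exact hεs (a', ω)
  have hqBR : ∀ ω, q ω ∈ BRinv v a := fun ω => ⟨hq ω, vbar_eq_of_br' v (hqbr ω)⟩
  have hπ₀BR : π₀ ∈ BRinv v a := ⟨hπ₀, vbar_eq_of_br' v habr⟩
  -- Step 4: spans
  apply le_antisymm
  · exact affineSpan_mono ℝ (fun π hπ => hπ.1)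
  · rw [affineSpan_le]
    intro π hπ
    have hd : ∀ ω, (e ω - π₀) ∈ (affineSpan ℝ (BRinv v a)).direction := by
      intro ω
      have h1 : q ω -ᵥ π₀ ∈ (affineSpan ℝ (BRinv v a)).direction :=
        AffineSubspace.vsub_mem_direction (mem_affineSpan ℝ (hqBR ω)) (mem_affineSpan ℝ hπ₀BR)
      have h2 : e ω - π₀ = ε⁻¹ • (q ω -ᵥ π₀) := by
        funext ω'
        simp only [hqdef, vsub_eq_sub, Pi.smul_apply, Pi.sub_apply, smul_eq_mul]
        field_simp
        ring
      rw [h2]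
      exact Submodule.smul_mem _ _ h1
    have hsum : (π - π₀) ∈ (affineSpan ℝ (BRinv v a)).direction := by
      have heq : π - π₀ = ∑ ω, π ω • (e ω - π₀) := by
        funext ω'
        simp only [Finset.sum_apply, Pi.smul_apply, Pi.sub_apply, smul_eq_mul, hedef]
        have : ∀ ω ∈ Finset.univ, π ω * ((if ω' = ω then (1:ℝ) else 0) - π₀ ω')
            = (if ω' = ω then π ω else 0) - π ω * π₀ ω' := by
          intro ω _; split <;> ring
        rw [Finset.sum_congr rfl this, Finset.sum_sub_distrib,
          Finset.sum_ite_eq Finset.univ ω', ← Finset.sum_mul, hπ.2]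
        simp
      rw [heq]
      exact Submodule.sum_mem _ fun ω _ => Submodule.smul_mem _ _ (hd ω)
    have hf := AffineSubspace.vadd_mem_of_mem_direction hsum (mem_affineSpan ℝ hπ₀BR)
    have : (π - π₀) +ᵥ π₀ = π := by
      funext ω'; simp
    rwa [this] at hf
end

section
/- [Remark 5, implication (ii)] Assume there are no redundant actions for the decision-maker. Then for every a ∈ Â and every π in the intrinsic (relative) interior of BR⁻¹(a) := {π ∈ Δ(Ω) : v(a,π) = v̄(π)}, no action other than a is optimal at π, i.e., br(π) = {a}. -/
open Finset

variable {Ω A : Type*}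

lemma extension_lemma {E : Type*} [NormedAddCommGroup E] [NormedSpace ℝ E] {C : Set E} {x y : E}
    (hx : x ∈ intrinsicInterior ℝ C) (hy : y ∈ C) :
    ∃ ε : ℝ, 0 < ε ∧ x + ε • (x - y) ∈ C := by
  have hxC : x ∈ C := intrinsicInterior_subset hx
  rw [mem_intrinsicInterior] at hx
  obtain ⟨z, hz, hzx⟩ := hx
  have hxspan : x ∈ affineSpan ℝ C := subset_affineSpan ℝ C hxC
  have hyspan : y ∈ affineSpan ℝ C := subset_affineSpan ℝ C hy
  have hmem : ∀ t : ℝ, x + t • (x - y) ∈ affineSpan ℝ C := by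
    intro t
    have := AffineSubspace.smul_vsub_vadd_mem (affineSpan ℝ C) t hxspan hyspan hxspan
    simpa [vsub_eq_sub, vadd_eq_add, add_comm] using this
  set c : ℝ → affineSpan ℝ C := fun t => ⟨x + t • (x - y), hmem t⟩ with hc
  have hcont : Continuous c := by
    apply Continuous.subtype_mk
    continuity
  have h0 : c 0 = z := by
    apply Subtype.ext
    simp [hc, ← hzx]
  have hopen : IsOpen (c ⁻¹' interior (((↑) : affineSpan ℝ C → E) ⁻¹' C)) :=
    hcont.isOpen_preimage _ isOpen_interior
  have h0mem : (0 : ℝ) ∈ c ⁻¹' interior (((↑) : affineSpan ℝ C → E) ⁻¹' C) := by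
    simp [h0, hz]
  obtain ⟨δ, hδ, hball⟩ := Metric.isOpen_iff.1 hopen 0 h0mem
  refine ⟨δ / 2, by linarith, ?_⟩
  have : c (δ / 2) ∈ interior (((↑) : affineSpan ℝ C → E) ⁻¹' C) := by
    apply hball
    rw [Metric.mem_ball, Real.dist_eq, sub_zero, abs_of_pos (by linarith : (0:ℝ) < δ/2)]
    linarith
  have h2 : c (δ / 2) ∈ (((↑) : affineSpan ℝ C → E) ⁻¹' C) := interior_subset this
  simpa [hc] using h2

/-- Remark 5, implication (ii): in the relative interior of `BR⁻¹(a)`, only `a` is optimal. -/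
theorem br_singleton_on_relint {Ω A : Type*} [Fintype Ω] [Nonempty Ω] [Fintype A] [Nonempty A]
    (u v : A → Ω → ℝ) (hnr : NoRedundantDM v) :
    ∀ a ∈ Ahat v, ∀ π ∈ intrinsicInterior ℝ (BRinv v a), br v π = {a} := by
  intro a ha π hπI
  have hπC : π ∈ BRinv v a := intrinsicInterior_subset hπI
  obtain ⟨hπs, hπa⟩ := hπC
  have le_vbar : ∀ (c : A) (ρ : Ω → ℝ), payP v c ρ ≤ vbar v ρ := fun c ρ => by
    unfold vbar; exact le_ciSup (f := fun a => payP v a ρ) (Set.Finite.bddAbove (Set.finite_range _)) c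
  have ha_br : a ∈ br v π := fun a' => by rw [hπa]; exact le_vbar a' π
  ext b
  simp only [Set.mem_singleton_iff]
  constructor
  · intro hb
    by_contra hba
    have hab : payP v b π = payP v a π := le_antisymm (ha_br b) (hb a)
    -- Step 1: b is optimal on all of BR⁻¹(a)
    have hbopt : ∀ π' ∈ BRinv v a, payP v b π' = vbar v π' := by
      intro π' hπ'
      obtain ⟨hπ's, hπ'a⟩ := hπ'
      obtain ⟨ε, hε, hmem⟩ := extension_lemma hπI (⟨hπ's, hπ'a⟩ : π' ∈ BRinv v a)
      have key : ∀ c : A, payP v c (π + ε • (π - π'))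
          = payP v c π + ε * (payP v c π - payP v c π') := by
        intro c
        simp only [payP, Pi.add_apply, Pi.smul_apply, Pi.sub_apply, smul_eq_mul,
          Finset.mul_sum, ← Finset.sum_sub_distrib, ← Finset.sum_add_distrib]
        exact Finset.sum_congr rfl fun ω _ => by ring
      obtain ⟨hms, hma⟩ := hmem
      have h1 : payP v b (π + ε • (π - π')) ≤ payP v a (π + ε • (π - π')) := by
        rw [hma]; exact le_vbar b _
      rw [key, key, hab] at h1
      have h2 : payP v a π' ≤ payP v b π' := by nlinarith
      refine le_antisymm (le_vbar b π') ?_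
      rw [← hπ'a]; exact h2
    -- Step 2: b ∈ Â, apply no-redundancy to Â \ {a}
    have hbA : b ∈ Ahat v := ⟨π, hπs, hb⟩
    obtain ⟨π₀, hπ₀s, hπ₀⟩ := hnr (Ahat v \ {a}) ⟨b, hbA, hba⟩
      ⟨Set.diff_subset, fun hsub => (hsub ha).2 rfl⟩
    obtain ⟨c₀, hc₀⟩ := Finite.exists_max (fun c => payP v c π₀)
    have hc₀v : payP v c₀ π₀ = vbar v π₀ := le_antisymm (le_vbar _ _) (by unfold vbar; exact ciSup_le hc₀)
    have hc₀A : c₀ ∈ Ahat v := ⟨π₀, hπ₀s, fun a' => hc₀ a'⟩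
    have hca : c₀ = a := by
      by_contra h
      exact absurd hc₀v (ne_of_lt (hπ₀ c₀ ⟨hc₀A, h⟩))
    have hπ₀C : π₀ ∈ BRinv v a := ⟨hπ₀s, hca ▸ hc₀v⟩
    exact absurd (hbopt π₀ hπ₀C) (ne_of_lt (hπ₀ b ⟨hbA, hba⟩))
  · rintro rfl; exact ha_br
end
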